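/- The function H is a first integral of system (B) on (0,K_x)×(0,K_y): for every (x,y) ∈ (0,K_x)×(0,K_y) one has ∂_x H(x,y) · r_x x(1 − x/K_x)(α − βy) + ∂_y H(x,y) · r_y y(1 − y/K_y)(−γ + δx) = 0; consequently, for every differentiable curve t ↦ (x(t), y(t)) with values in (0,K_x)×(0,K_y) that solves (B) on an interval I, the function t ↦ H(x(t), y(t)) is constant on I. -/

import Mathlib

open Set

noncomputable section

/-- The first integral
`H(x,y) = (1/r_y)(−α log y + (α − βKy) log(Ky − y)) + (1/r_x)(−γ log x + (γ − δKx) log(Kx − x))`. -/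
def HPP (rx ry Kx Ky α β γ δ : ℝ) (x y : ℝ) : ℝ :=
  (1 / ry) * (-α * Real.log y + (α - β * Ky) * Real.log (Ky - y))
  + (1 / rx) * (-γ * Real.log x + (γ - δ * Kx) * Real.log (Kx - x))

lemma auxPP (c a b K u : ℝ) (h0 : 0 < u) (hK : u < K) :
    HasDerivAt (fun v => c * (a * Real.log v + b * Real.log (K - v)))
      (c * (a / u - b / (K - u))) u := by
  have hu : u ≠ 0 := h0.ne'
  have hKu : K - u ≠ 0 := sub_ne_zero.2 hK.ne'
  have h2 : HasDerivAt (fun v : ℝ => K - v) (-1) u := (hasDerivAt_id u).const_sub K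
  have h3 := (Real.hasDerivAt_log hKu).comp u h2
  have h4 := ((Real.hasDerivAt_log hu).const_mul a).add (h3.const_mul b)
  have h5 := h4.const_mul c
  have hval : c * (a / u - b / (K - u)) = c * (a * u⁻¹ + b * ((K - u)⁻¹ * -1)) := by
    rw [div_eq_mul_inv, div_eq_mul_inv]; ring
  rw [hval]
  exact h5

lemma hasDerivAt_HPP_x (rx ry Kx Ky α β γ δ x y : ℝ) (h0 : 0 < x) (h1 : x < Kx) :
    HasDerivAt (fun x' => HPP rx ry Kx Ky α β γ δ x' y)
      ((1 / rx) * (-γ / x - (γ - δ * Kx) / (Kx - x))) x := by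
  have h := (auxPP (1 / rx) (-γ) (γ - δ * Kx) Kx x h0 h1).const_add
      ((1 / ry) * (-α * Real.log y + (α - β * Ky) * Real.log (Ky - y)))
  have : (1 / rx) * (-γ / x - (γ - δ * Kx) / (Kx - x))
      = (1 / rx) * (-γ / x - (γ - δ * Kx) / (Kx - x)) := rfl
  exact h

lemma hasDerivAt_HPP_y (rx ry Kx Ky α β γ δ x y : ℝ) (h0 : 0 < y) (h1 : y < Ky) :
    HasDerivAt (fun y' => HPP rx ry Kx Ky α β γ δ x y')
      ((1 / ry) * (-α / y - (α - β * Ky) / (Ky - y))) y := by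
  have h := (auxPP (1 / ry) (-α) (α - β * Ky) Ky y h0 h1).add_const
      ((1 / rx) * (-γ * Real.log x + (γ - δ * Kx) * Real.log (Kx - x)))
  exact h

/-- `H` is a first integral of the predator-prey system (B) on `(0,Kx) × (0,Ky)`: the gradient
of `H` is orthogonal to the vector field, and `H` is constant along every solution of (B) with
values in `(0,Kx) × (0,Ky)` defined on an interval. -/
theorem statement16 (rx ry Kx Ky α β γ δ : ℝ)
    (hrx : 0 < rx) (hry : 0 < ry) (hKx : 0 < Kx) (hKy : 0 < Ky)
    (hα : 0 < α) (hβ : 0 < β) (hγ : 0 < γ) (hδ : 0 < δ) :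
    (∀ x y : ℝ, x ∈ Ioo (0:ℝ) Kx → y ∈ Ioo (0:ℝ) Ky →
      deriv (fun x' => HPP rx ry Kx Ky α β γ δ x' y) x
          * (rx * x * (1 - x / Kx) * (α - β * y))
        + deriv (fun y' => HPP rx ry Kx Ky α β γ δ x y') y
          * (ry * y * (1 - y / Ky) * (-γ + δ * x)) = 0) ∧
    (∀ I : Set ℝ, I.OrdConnected → ∀ x y : ℝ → ℝ,
      (∀ t ∈ I, x t ∈ Ioo (0:ℝ) Kx ∧ y t ∈ Ioo (0:ℝ) Ky) →
      (∀ t ∈ I, HasDerivAt x (rx * x t * (1 - x t / Kx) * (α - β * y t)) t ∧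
                HasDerivAt y (ry * y t * (1 - y t / Ky) * (-γ + δ * x t)) t) →
      ∀ s ∈ I, ∀ t ∈ I,
        HPP rx ry Kx Ky α β γ δ (x s) (y s) = HPP rx ry Kx Ky α β γ δ (x t) (y t)) := by
  have key : ∀ x y : ℝ, 0 < x → x < Kx → 0 < y → y < Ky →
      ((1 / rx) * (-γ / x - (γ - δ * Kx) / (Kx - x)))
          * (rx * x * (1 - x / Kx) * (α - β * y))
        + ((1 / ry) * (-α / y - (α - β * Ky) / (Ky - y)))
          * (ry * y * (1 - y / Ky) * (-γ + δ * x)) = 0 := by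
    intro x y hx0 hx1 hy0 hy1
    have hx : x ≠ 0 := hx0.ne'
    have hy : y ≠ 0 := hy0.ne'
    have hKxx : Kx - x ≠ 0 := sub_ne_zero.2 hx1.ne'
    have hKyy : Ky - y ≠ 0 := sub_ne_zero.2 hy1.ne'
    field_simp
    ring
  constructor
  · intro x y hx hy
    rw [(hasDerivAt_HPP_x rx ry Kx Ky α β γ δ x y hx.1 hx.2).deriv,
        (hasDerivAt_HPP_y rx ry Kx Ky α β γ δ x y hy.1 hy.2).deriv]
    exact key x y hx.1 hx.2 hy.1 hy.2
  · intro I hI x y hmem hode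
    set g : ℝ → ℝ := fun t => HPP rx ry Kx Ky α β γ δ (x t) (y t) with hg
    have hderiv : ∀ t ∈ I, HasFDerivWithinAt g (0 : ℝ →L[ℝ] ℝ) I t := by
      intro t htI
      obtain ⟨hxm, hym⟩ := hmem t htI
      obtain ⟨hdx, hdy⟩ := hode t htI
      have hF := (auxPP (1 / ry) (-α) (α - β * Ky) Ky (y t) hym.1 hym.2).comp t hdy
      have hG := (auxPP (1 / rx) (-γ) (γ - δ * Kx) Kx (x t) hxm.1 hxm.2).comp t hdx
      have h3 := hF.add hG
      have h4 : HasDerivAt g 0 t := by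
        refine (show HasDerivAt g _ t from h3).congr_deriv ?_
        have := key (x t) (y t) hxm.1 hxm.2 hym.1 hym.2
        linarith
      have hfw := h4.hasFDerivAt.hasFDerivWithinAt (s := I)
      have hz : (ContinuousLinearMap.smulRight (1 : ℝ →L[ℝ] ℝ) (0 : ℝ)) = 0 := by
        ext; simp
      exact hz ▸ hfw
    have hconv : Convex ℝ I := convex_iff_ordConnected.mpr hI
    intro s hs t ht
    have hb := Convex.norm_image_sub_le_of_norm_hasFDerivWithin_le (f' := fun _ => (0 : ℝ →L[ℝ] ℝ))
      (C := 0) hderiv (fun u hu => by simp) hconv ht hs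
    have h0 : ‖g s - g t‖ ≤ 0 := by simpa using hb
    exact sub_eq_zero.mp (norm_le_zero_iff.mp h0)
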